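/- Let μ be a probability measure on a compact set B and let f, g : B → [α, β] be measurable densities with 0 < α < β < ∞. Then d_KL(f‖g) ≥ c(α,β) · ∫_B (f - g)² dμ, where c(α,β) = h(β/α)/β and h(γ) = (γ - 1 - log γ)/(γ - 1)² for γ ≠ 1, h(1) = 1/2. -/

import Mathlib

open MeasureTheory

open MeasureTheory

-- quadratic lower bound of log on [1,∞)
lemma log_quad_lb {γ : ℝ} (hγ : 1 ≤ γ) : γ - 1 - (γ - 1)^2 / 2 ≤ Real.log γ := by
  set q : ℝ → ℝ := fun t => Real.log t - (t - 1) + (t - 1)^2 / 2 with hq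
  have hderiv : ∀ t : ℝ, 0 < t → HasDerivAt q (t⁻¹ - 1 + (t - 1)) t := by
    intro t ht
    have h1 := Real.hasDerivAt_log (ne_of_gt ht)
    have h2 : HasDerivAt (fun t : ℝ => (t - 1)^2 / 2) (t - 1) t := by
      have : HasDerivAt (fun t : ℝ => (t - 1)^2 / 2) (2 * (t-1)^(2-1) * 1 / 2) t := by
        exact (((hasDerivAt_id t).sub_const 1).pow 2).div_const 2
      simpa using this
    exact (h1.sub ((hasDerivAt_id t).sub_const 1)).add h2
  have hmono : MonotoneOn q (Set.Icc 1 γ) := by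
    apply monotoneOn_of_deriv_nonneg (convex_Icc 1 γ)
    · intro t ht
      exact (hderiv t (lt_of_lt_of_le one_pos ht.1)).continuousAt.continuousWithinAt
    · intro t ht
      rw [interior_Icc] at ht
      exact ((hderiv t (lt_trans one_pos ht.1)).differentiableAt).differentiableWithinAt
    · intro t ht
      rw [interior_Icc] at ht
      have ht0 : (0:ℝ) < t := lt_trans one_pos ht.1
      rw [(hderiv t ht0).deriv]
      have : t⁻¹ - 1 + (t - 1) = (t-1)^2 / t := by field_simp; ring
      rw [this]; positivity
  have := hmono (Set.left_mem_Icc.mpr hγ) (Set.right_mem_Icc.mpr hγ) hγ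
  simp only [hq, Real.log_one] at this
  nlinarith [this]

-- key pointwise lemma
lemma key_ineq {C γ0 : ℝ} (hC0 : 0 < C) (hC2 : C ≤ 1/2) (hγ0 : 1 < γ0)
    (heq : C * (γ0 - 1)^2 = γ0 - 1 - Real.log γ0) :
    ∀ s : ℝ, 0 < s → s ≤ γ0 → C * (s - 1)^2 ≤ s - 1 - Real.log s := by
  set F : ℝ → ℝ := fun s => s - 1 - Real.log s - C * (s - 1)^2 with hF
  have hderiv : ∀ t : ℝ, 0 < t → HasDerivAt F (1 - t⁻¹ - C * (2 * (t - 1))) t := by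
    intro t ht
    have h1 := Real.hasDerivAt_log (ne_of_gt ht)
    have h2 : HasDerivAt (fun t : ℝ => C * (t - 1)^2) (C * (2 * (t - 1))) t := by
      have := (((hasDerivAt_id t).sub_const 1).pow 2).const_mul C
      simpa using this
    have h3 : HasDerivAt (fun t : ℝ => t - 1 - Real.log t) (1 - t⁻¹) t :=
      ((hasDerivAt_id t).sub_const 1).sub h1
    exact h3.sub h2
  have hF1 : F 1 = 0 := by simp [hF]
  have hFγ0 : F γ0 = 0 := by simp only [hF]; linarith [heq]
  -- derivative sign rewrite
  have hDsign : ∀ t : ℝ, 0 < t → deriv F t = (t - 1) * (1 - 2*C*t) / t := by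
    intro t ht
    rw [(hderiv t ht).deriv]
    field_simp
  intro s hs hsγ0
  rw [← sub_nonneg]
  have key : 0 ≤ F s := by
    rcases le_or_gt s 1 with hs1 | hs1
    · -- F antitone on [s,1]
      have hanti : AntitoneOn F (Set.Icc s 1) := by
        apply antitoneOn_of_deriv_nonpos (convex_Icc s 1)
        · intro t ht
          exact (hderiv t (lt_of_lt_of_le hs ht.1)).continuousAt.continuousWithinAt
        · intro t ht
          rw [interior_Icc] at ht
          exact ((hderiv t (lt_trans hs ht.1)).differentiableAt).differentiableWithinAt
        · intro t ht
          rw [interior_Icc] at ht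
          have ht0 : 0 < t := lt_trans hs ht.1
          rw [hDsign t ht0]
          apply div_nonpos_of_nonpos_of_nonneg _ (le_of_lt ht0)
          have : 2*C*t ≤ 1 := by nlinarith [ht.2]
          nlinarith [ht.2]
      have := hanti (Set.left_mem_Icc.mpr hs1) (Set.right_mem_Icc.mpr hs1) hs1
      rw [hF1] at this; exact this
    · -- s ∈ (1, γ0]
      set m : ℝ := (2*C)⁻¹ with hm
      have h2C : (0:ℝ) < 2*C := by positivity
      have hm1 : 1 ≤ m := by
        rw [hm]
        calc (1:ℝ) = (2*C) * (2*C)⁻¹ := by rw [mul_inv_cancel₀ (ne_of_gt h2C)]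
          _ ≤ 1 * (2*C)⁻¹ := by
              apply mul_le_mul_of_nonneg_right (by linarith) (by positivity)
          _ = (2*C)⁻¹ := one_mul _
      rcases le_or_gt s m with hsm | hsm
      · -- F monotone on [1, s]
        have hmono : MonotoneOn F (Set.Icc 1 s) := by
          apply monotoneOn_of_deriv_nonneg (convex_Icc 1 s)
          · intro t ht
            exact (hderiv t (lt_of_lt_of_le one_pos ht.1)).continuousAt.continuousWithinAt
          · intro t ht
            rw [interior_Icc] at ht
            exact ((hderiv t (lt_trans one_pos ht.1)).differentiableAt).differentiableWithinAt
          · intro t ht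
            rw [interior_Icc] at ht
            have ht0 : 0 < t := lt_trans one_pos ht.1
            rw [hDsign t ht0]
            apply div_nonneg _ (le_of_lt ht0)
            have htm : t < m := lt_of_lt_of_le ht.2 hsm
            have : 2*C*t < 1 := by
              rw [hm] at htm
              have := mul_lt_mul_of_pos_left htm h2C
              rwa [mul_inv_cancel₀ (ne_of_gt h2C)] at this
            nlinarith [ht.1]
        have := hmono (Set.left_mem_Icc.mpr (le_of_lt hs1)) (Set.right_mem_Icc.mpr (le_of_lt hs1)) (le_of_lt hs1)
        rw [hF1] at this; exact this
      · -- F antitone on [s, γ0]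
        have hanti : AntitoneOn F (Set.Icc m γ0) := by
          apply antitoneOn_of_deriv_nonpos (convex_Icc m γ0)
          · intro t ht
            exact (hderiv t (lt_of_lt_of_le one_pos (le_trans hm1 ht.1))).continuousAt.continuousWithinAt
          · intro t ht
            rw [interior_Icc] at ht
            exact ((hderiv t (lt_of_lt_of_le one_pos (le_of_lt (lt_of_le_of_lt hm1 ht.1)))).differentiableAt).differentiableWithinAt
          · intro t ht
            rw [interior_Icc] at ht
            have ht1 : 1 < t := lt_of_le_of_lt hm1 ht.1
            have ht0 : 0 < t := lt_trans one_pos ht1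
            rw [hDsign t ht0]
            apply div_nonpos_of_nonpos_of_nonneg _ (le_of_lt ht0)
            have : 1 ≤ 2*C*t := by
              have htm : m < t := ht.1
              rw [hm] at htm
              have : (2*C)⁻¹ * (2*C) ≤ t * (2*C) := by
                apply mul_le_mul_of_nonneg_right (le_of_lt htm) (by positivity)
              rw [inv_mul_cancel₀ (by positivity)] at this
              nlinarith [this]
            nlinarith [ht1]
        have hsmem : s ∈ Set.Icc m γ0 := ⟨le_of_lt hsm, hsγ0⟩
        have hγmem : γ0 ∈ Set.Icc m γ0 := ⟨le_of_lt (lt_of_lt_of_le hsm hsγ0), le_refl _⟩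
        have := hanti hsmem hγmem hsγ0
        rw [hFγ0] at this; exact this
  simpa [hF] using key

set_option maxHeartbeats 1000000 in
theorem kl_lower_bound {B : Type*} [MeasurableSpace B] [TopologicalSpace B] [CompactSpace B]
    (μ : Measure B) [IsProbabilityMeasure μ]
    (α β : ℝ) (hα : 0 < α) (hαβ : α < β)
    (h : ℝ → ℝ)
    (hdef : ∀ γ : ℝ, γ ≠ 1 → h γ = (γ - 1 - Real.log γ) / (γ - 1) ^ 2)
    (hone : h 1 = 1 / 2)
    (f g : B → ℝ) (hfm : Measurable f) (hgm : Measurable g)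
    (hf : ∀ x, f x ∈ Set.Icc α β) (hg : ∀ x, g x ∈ Set.Icc α β)
    (hfint : ∫ x, f x ∂μ = 1) (hgint : ∫ x, g x ∂μ = 1) :
    (h (β / α) / β) * ∫ x, (f x - g x) ^ 2 ∂μ ≤ ∫ x, f x * Real.log (f x / g x) ∂μ := by
  have hβ : 0 < β := lt_trans hα hαβ
  set γ0 : ℝ := β / α with hγ0def
  have hγ0 : 1 < γ0 := (one_lt_div hα).mpr hαβ
  set C : ℝ := h γ0 with hCdef
  have hCeq : C = (γ0 - 1 - Real.log γ0) / (γ0 - 1)^2 := hdef γ0 (ne_of_gt hγ0)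
  have hγ0m1 : 0 < γ0 - 1 := by linarith
  have hlogγ0 : Real.log γ0 < γ0 - 1 := Real.log_lt_sub_one_of_pos (by linarith) (ne_of_gt hγ0)
  have hC0 : 0 < C := by
    rw [hCeq]; apply div_pos (by linarith) (by positivity)
  have hC2 : C ≤ 1/2 := by
    rw [hCeq, div_le_iff₀ (by positivity : (0:ℝ) < (γ0-1)^2)]
    have := log_quad_lb (le_of_lt hγ0)
    nlinarith [this]
  have heq : C * (γ0 - 1)^2 = γ0 - 1 - Real.log γ0 := by
    rw [hCeq]; field_simp
  -- pointwise inequality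
  have hpt : ∀ x, (C/β) * (f x - g x)^2 ≤ f x * Real.log (f x / g x) - f x + g x := by
    intro x
    obtain ⟨hfa, hfb⟩ := hf x
    obtain ⟨hga, hgb⟩ := hg x
    set a := f x
    set b := g x
    have ha0 : 0 < a := lt_of_lt_of_le hα hfa
    have hb0 : 0 < b := lt_of_lt_of_le hα hga
    have hs0 : 0 < b / a := div_pos hb0 ha0
    have hsγ0 : b / a ≤ γ0 := by
      rw [hγ0def]
      exact div_le_div₀ (le_of_lt hβ) hgb hα hfa
    have key := key_ineq hC0 hC2 hγ0 heq (b/a) hs0 hsγ0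
    have hlog : Real.log (b/a) = Real.log b - Real.log a :=
      Real.log_div (ne_of_gt hb0) (ne_of_gt ha0)
    have hlog2 : Real.log (a/b) = Real.log a - Real.log b :=
      Real.log_div (ne_of_gt ha0) (ne_of_gt hb0)
    rw [hlog] at key
    -- multiply key through by a^2
    have key2 : C * (b - a)^2 ≤ a * (a * Real.log (a/b) - a + b) := by
      have h1 : a^2 * (C * (b/a - 1)^2) = C * (b - a)^2 := by
        field_simp
      have h2 : a^2 * (b/a - 1 - (Real.log b - Real.log a))
          = a * (a * Real.log (a/b) - a + b) := by rw [hlog2]; field_simp; ring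
      have := mul_le_mul_of_nonneg_left key (le_of_lt (by positivity : (0:ℝ) < a^2))
      rw [h1, h2] at this
      exact this
    have hRHS0 : 0 ≤ a * Real.log (a/b) - a + b := by
      nlinarith [key2, sq_nonneg (b - a)]
    have key3 : C * (a - b)^2 ≤ β * (a * Real.log (a/b) - a + b) := by
      have := mul_le_mul_of_nonneg_right hfb hRHS0
      nlinarith [key2]
    rw [div_mul_eq_mul_div, div_le_iff₀ hβ]
    linarith [key3, mul_comm β (a * Real.log (a/b) - a + b)]
  -- integrability
  have hbnd : ∀ x, |f x - g x| ≤ β - α := by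
    intro x
    obtain ⟨hfa, hfb⟩ := hf x
    obtain ⟨hga, hgb⟩ := hg x
    rw [abs_le]; constructor <;> linarith
  have hint_sq : Integrable (fun x => (f x - g x)^2) μ := by
    apply Integrable.mono' (integrable_const ((β - α)^2))
      ((hfm.sub hgm).pow_const 2).aestronglyMeasurable
    apply ae_of_all
    intro x
    rw [Real.norm_eq_abs, abs_of_nonneg (sq_nonneg _)]
    have := hbnd x
    show (f x - g x)^2 ≤ (β - α)^2
    nlinarith [abs_nonneg (f x - g x), sq_abs (f x - g x), this]
  have hint_f : Integrable f μ := by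
    apply Integrable.mono' (integrable_const β) hfm.aestronglyMeasurable
    apply ae_of_all; intro x
    rw [Real.norm_eq_abs, abs_of_nonneg (le_of_lt (lt_of_lt_of_le hα (hf x).1))]; exact (hf x).2
  have hint_g : Integrable g μ := by
    apply Integrable.mono' (integrable_const β) hgm.aestronglyMeasurable
    apply ae_of_all; intro x
    rw [Real.norm_eq_abs, abs_of_nonneg (le_of_lt (lt_of_lt_of_le hα (hg x).1))]; exact (hg x).2
  have hint_fl : Integrable (fun x => f x * Real.log (f x / g x)) μ := by
    apply Integrable.mono' (integrable_const (β * Real.log γ0))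
    · have hm1 : Measurable fun x => Real.log (f x / g x) :=
        Real.measurable_log.comp (hfm.div hgm)
      exact (hfm.mul hm1).aestronglyMeasurable
    apply ae_of_all; intro x
    obtain ⟨hfa, hfb⟩ := hf x
    obtain ⟨hga, hgb⟩ := hg x
    have ha0 : 0 < f x := lt_of_lt_of_le hα hfa
    have hb0 : 0 < g x := lt_of_lt_of_le hα hga
    rw [Real.norm_eq_abs, abs_mul, abs_of_nonneg (le_of_lt ha0)]
    have hlogub : |Real.log (f x / g x)| ≤ Real.log γ0 := by
      rw [abs_le]
      constructor
      · have h1 : α / β ≤ f x / g x := div_le_div₀ (le_of_lt ha0) hfa hb0 hgb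
        have h1' : Real.log (α/β) ≤ Real.log (f x / g x) :=
          Real.log_le_log (by positivity) h1
        have h1'' : Real.log (α/β) = - Real.log γ0 := by
          rw [hγ0def, Real.log_div (ne_of_gt hα) (ne_of_gt hβ),
            Real.log_div (ne_of_gt hβ) (ne_of_gt hα)]
          ring
        linarith
      · have h2 : f x / g x ≤ γ0 := by
          rw [hγ0def]; exact div_le_div₀ (le_of_lt hβ) hfb hα hga
        exact Real.log_le_log (div_pos ha0 hb0) h2
    exact mul_le_mul hfb hlogub (abs_nonneg _) (le_of_lt hβ)
  have hpt_int : Integrable (fun x => f x * Real.log (f x / g x) - f x + g x) μ :=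
    (hint_fl.sub hint_f).add hint_g
  have hint_lhs : Integrable (fun x => (C/β) * (f x - g x)^2) μ := hint_sq.const_mul _
  have hmono := integral_mono hint_lhs hpt_int hpt
  rw [MeasureTheory.integral_const_mul] at hmono
  have hsplit : ∫ x, (f x * Real.log (f x / g x) - f x + g x) ∂μ
      = ∫ x, f x * Real.log (f x / g x) ∂μ - ∫ x, f x ∂μ + ∫ x, g x ∂μ := by
    have h1 : Integrable (fun x => f x * Real.log (f x / g x) - f x) μ := hint_fl.sub hint_f
    rw [integral_add h1 hint_g, integral_sub hint_fl hint_f]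
  rw [hsplit, hfint, hgint] at hmono
  calc (h (β/α) / β) * ∫ x, (f x - g x)^2 ∂μ = (C/β) * ∫ x, (f x - g x)^2 ∂μ := by
        rw [hCdef, hγ0def]
    _ ≤ ∫ x, f x * Real.log (f x / g x) ∂μ := by linarith [hmono]
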